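/- Suppose ({Ψ_i},{λ_t}) is a Galois scaffold for L/K with precision c ≥ 1. For s ∈ S_{p^n} set Ψ^{(s)} = Ψ_n^{s_(0)}·Ψ_{n−1}^{s_(1)}·⋯·Ψ_2^{s_(n−2)}·Ψ_1^{s_(n−1)} ∈ K[G], and for s, t ∈ S_{p^n} write s ⪯ t if s_(i) ≤ t_(i) for all 0 ≤ i ≤ n−1. Then for every s ∈ S_{p^n} and every t ∈ ℤ there exists U_{st} ∈ O_K^× such that Ψ^{(s)}(λ_t) ≡ U_{st}·λ_{t+𝔟(s)} (mod λ_{t+𝔟(s)}·M_L^c) if s ⪯ 𝔞(r(t)), and Ψ^{(s)}(λ_t) ≡ 0 (mod λ_{t+𝔟(s)}·M_L^c) if s ⋠ 𝔞(r(t)). -/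

import Mathlib

open scoped TensorProduct

noncomputable section

/-- The natural action of the group algebra `K[G]`, `G = Gal(L/K)`, on `L`. -/
def actK (K L : Type) [Field K] [Field L] [Algebra K L]
    (ξ : MonoidAlgebra K (L ≃ₐ[K] L)) (y : L) : L :=
  ξ.coeff.sum fun σ c => algebraMap K L c * σ y

/-- `vL` is a normalized (additive, surjective onto `ℤ`) valuation on the field `L`. -/
def IsNormValuation {L : Type} [Field L] (vL : L → WithTop ℤ) : Prop :=
  vL 0 = ⊤ ∧ (∀ x : L, x ≠ 0 → vL x ≠ ⊤) ∧
    (∀ x y : L, vL (x * y) = vL x + vL y) ∧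
    (∀ x y : L, min (vL x) (vL y) ≤ vL (x + y)) ∧
    (∀ m : ℤ, ∃ x : L, vL x = (m : WithTop ℤ))

/-- Bundled context: `vL` is the normalized valuation of `L`, Galois-invariant;
`K` embeds with value group `p^n ℤ` (so `L/K` is totally ramified of degree `p^n`);
`L` is complete; and the residue field (of `K`, hence of `L`) is perfect of
characteristic `p`. -/
def LocalCtx (p n : ℕ) (K L : Type) [Field K] [Field L] [Algebra K L]
    (vL : L → WithTop ℤ) : Prop :=
  IsNormValuation vL ∧
  (∀ (σ : L ≃ₐ[K] L) (x : L), vL (σ x) = vL x) ∧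
  (∀ k : K, k ≠ 0 → ∃ m : ℤ, vL (algebraMap K L k) = ((p ^ n * m : ℤ) : WithTop ℤ)) ∧
  (∀ f : ℕ → L,
    (∀ m : ℤ, ∃ N : ℕ, ∀ j k : ℕ, N ≤ j → N ≤ k → (m : WithTop ℤ) < vL (f j - f k)) →
    ∃ x : L, ∀ m : ℤ, ∃ N : ℕ, ∀ k : ℕ, N ≤ k → (m : WithTop ℤ) < vL (f k - x)) ∧
  (∀ x : K, (0 : WithTop ℤ) ≤ vL (algebraMap K L x) →
    ∃ y : K, (0 : WithTop ℤ) < vL (algebraMap K L (x - y ^ p)))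

/-- The `i`-th digit of `s` in base `p`. -/
def digit (p s i : ℕ) : ℕ := s / p ^ i % p

/-- `r : ℤ → S_{p^n}`, the least nonnegative residue modulo `p^n`. -/
def rres (p n : ℕ) (t : ℤ) : ℕ := (t % ((p : ℤ) ^ n)).toNat

/-- `𝔟(s) = s_(0) p^0 b_n + s_(1) p^1 b_{n-1} + ⋯ + s_(n-1) p^{n-1} b_1`. -/
def bfrak (p n : ℕ) (b : ℕ → ℤ) (s : ℕ) : ℤ :=
  ∑ i ∈ Finset.range n, (digit p s i : ℤ) * (p : ℤ) ^ i * b (n - i)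

/-- `𝔞 : S_{p^n} → S_{p^n}` is the inverse of the bijection `r ∘ (-𝔟)`. -/
def IsAfrak (p n : ℕ) (b : ℕ → ℤ) (afrak : ℕ → ℕ) : Prop :=
  ∀ s : ℕ, s < p ^ n → afrak s < p ^ n ∧ rres p n (-(bfrak p n b (afrak s))) = s

/-- `b 1 ≤ ⋯ ≤ b n` are the lower ramification breaks of `L/K`, counted with
multiplicity: for every `m`, the lower ramification group `G_m` has order
`p ^ #{i ∈ [1,n] : b i ≥ m}`. -/
def IsRamBreaks (p n : ℕ) (K L : Type) [Field K] [Field L] [Algebra K L]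
    (vL : L → WithTop ℤ) (b : ℕ → ℤ) : Prop :=
  (∀ i j : ℕ, 1 ≤ i → i ≤ j → j ≤ n → b i ≤ b j) ∧
  ∀ m : ℤ, Nat.card {σ : L ≃ₐ[K] L // ∀ x : L, (0 : WithTop ℤ) ≤ vL x →
      ((m + 1 : ℤ) : WithTop ℤ) ≤ vL (σ x - x)} =
    p ^ ((Finset.Icc 1 n).filter fun i => m ≤ b i).card

/-- `({Ψ_i}, {λ_t})` is a Galois scaffold for `L/K` with precision `c`. -/
def IsGaloisScaffold (p n : ℕ) (K L : Type) [Field K] [Field L] [Algebra K L]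
    (vL : L → WithTop ℤ) (b : ℕ → ℤ) (afrak : ℕ → ℕ)
    (Ψ : ℕ → MonoidAlgebra K (L ≃ₐ[K] L)) (lam : ℤ → L) (c : ℕ) : Prop :=
  (∀ t : ℤ, vL (lam t) = (t : WithTop ℤ)) ∧
  (∀ t₁ t₂ : ℤ, ((p : ℤ) ^ n) ∣ (t₁ - t₂) → ∃ k : K, lam t₁ = algebraMap K L k * lam t₂) ∧
  (∀ i : ℕ, 1 ≤ i → i ≤ n → actK K L (Ψ i) 1 = 0) ∧
  (∀ i : ℕ, 1 ≤ i → i ≤ n → ∀ t : ℤ,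
    (1 ≤ digit p (afrak (rres p n t)) (n - i) →
      ∃ u : K, vL (algebraMap K L u) = 0 ∧
        ((t + (p : ℤ) ^ (n - i) * b i + c : ℤ) : WithTop ℤ) ≤
          vL (actK K L (Ψ i) (lam t) -
            algebraMap K L u * lam (t + (p : ℤ) ^ (n - i) * b i))) ∧
    (digit p (afrak (rres p n t)) (n - i) = 0 →
      ((t + (p : ℤ) ^ (n - i) * b i + c : ℤ) : WithTop ℤ) ≤
        vL (actK K L (Ψ i) (lam t))))

/-- The map `a ⊗ b ↦ a · σ(b)`. -/
def phiAux (K L : Type) [Field K] [Field L] [Algebra K L] (σ : L ≃ₐ[K] L) :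
    L ⊗[K] L →ₗ[K] L :=
  TensorProduct.lift ((LinearMap.mul K L).compl₂ σ.toLinearMap)

/-- The map `φ : L ⊗_K L → L[G]`, `φ(a ⊗ b) = Σ_{σ ∈ G} a σ(b) σ`, with `L[G]`
realized as finitely supported functions `G →₀ L`. -/
def phi (K L : Type) [Field K] [Field L] [Algebra K L] [FiniteDimensional K L] :
    L ⊗[K] L →ₗ[K] ((L ≃ₐ[K] L) →₀ L) :=
  ∑ σ : L ≃ₐ[K] L, (Finsupp.lsingle σ).comp (phiAux K L σ)

/-- `φ(β)` lies in `K[G] ⊆ L[G]`, i.e. all its coefficients are in `K`. -/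
def PhiInKG (K L : Type) [Field K] [Field L] [Algebra K L] [FiniteDimensional K L]
    (β : L ⊗[K] L) : Prop :=
  ∀ σ : L ≃ₐ[K] L, ∃ k : K, phi K L β σ = algebraMap K L k

/-- `𝒯` is the set of Teichmüller representatives of `K`: a multiplicatively
closed set of representatives for the residue field. -/
def IsTeichmuller (K L : Type) [Field K] [Field L] [Algebra K L]
    (vL : L → WithTop ℤ) (𝒯 : Set K) : Prop :=
  (0 : K) ∈ 𝒯 ∧
  (∀ x ∈ 𝒯, x ≠ 0 → vL (algebraMap K L x) = 0) ∧
  (∀ t₁ ∈ 𝒯, ∀ t₂ ∈ 𝒯, t₁ * t₂ ∈ 𝒯) ∧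
  (∀ x : K, (0 : WithTop ℤ) ≤ vL (algebraMap K L x) →
    ∃! t : K, t ∈ 𝒯 ∧ (0 : WithTop ℤ) < vL (algebraMap K L (x - t)))

/-- The partial order on `(ℤ × ℤ)/H`, `H = ⟨(p^n, -p^n)⟩`, expressed on
representatives: `[q] ≤ [q']` iff some representative of `[q']` dominates `q`. -/
def cosetLE (p n : ℕ) (q q' : ℤ × ℤ) : Prop :=
  ∃ k : ℤ, q.1 ≤ q'.1 + k * (p : ℤ) ^ n ∧ q.2 ≤ q'.2 - k * (p : ℤ) ^ n

/-- Equality of cosets modulo `H = ⟨(p^n, -p^n)⟩`. -/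
def cosetEq (p n : ℕ) (q q' : ℤ × ℤ) : Prop :=
  ∃ k : ℤ, q'.1 = q.1 + k * (p : ℤ) ^ n ∧ q'.2 = q.2 - k * (p : ℤ) ^ n

/-- `A : ℤ → ℕ → K` records the coefficients of the expansion
`β = Σ_{(i,j) ∈ ℱ} A i j · π_L^i ⊗ π_L^j` with Teichmüller coefficients:
writing `β = Σ_{0 ≤ j < p^n} c_j ⊗ π_L^j`, each `c_j` is the convergent sum
`Σ_i A i j π_L^i` (partial sums up to `m` approximate `c_j` within `M_L^{m+1}`). -/
def IsExpansion (p n : ℕ) (K L : Type) [Field K] [Field L] [Algebra K L]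
    (vL : L → WithTop ℤ) (𝒯 : Set K) (πL : L) (β : L ⊗[K] L) (A : ℤ → ℕ → K) : Prop :=
  (∀ (i : ℤ) (j : ℕ), A i j ∈ 𝒯) ∧
  ∃ N : ℕ → ℤ, ∃ c : ℕ → L,
    (∀ (j : ℕ) (i : ℤ), i < N j → A i j = 0) ∧
    β = ∑ j ∈ Finset.range (p ^ n), c j ⊗ₜ[K] (πL ^ j) ∧
    (∀ j : ℕ, j < p ^ n → ∀ m : ℤ,
      (m : WithTop ℤ) <
        vL (c j - ∑ i ∈ Finset.Icc (N j) m, algebraMap K L (A i j) * πL ^ (i : ℤ)))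

/-- `R(β)`: the classes `[i,j]`, `(i,j) ∈ ℱ`, with `a_{ij} ≠ 0`. -/
def Rset (p n : ℕ) {K : Type} [Field K] (A : ℤ → ℕ → K) : Set (ℤ × ℤ) :=
  {q | ∃ (i : ℤ) (j : ℕ), j < p ^ n ∧ A i j ≠ 0 ∧ q = (i, (j : ℤ))}

/-- `D(β)`: the diagram of `β` (upward closure of `R(β)`). -/
def Dset (p n : ℕ) {K : Type} [Field K] (A : ℤ → ℕ → K) : Set (ℤ × ℤ) :=
  {q | ∃ r ∈ Rset p n A, cosetLE p n r q}

/-- `G(β)`: the minimal elements of `D(β)`. -/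
def Gset (p n : ℕ) {K : Type} [Field K] (A : ℤ → ℕ → K) : Set (ℤ × ℤ) :=
  {q | q ∈ Dset p n A ∧ ∀ q' ∈ Dset p n A, cosetLE p n q' q → cosetLE p n q q'}

/-- `dval = d(β) = min {i + j : [i,j] ∈ D(β)}`. -/
def IsDval (p n : ℕ) {K : Type} [Field K] (A : ℤ → ℕ → K) (dval : ℤ) : Prop :=
  IsLeast {v : ℤ | ∃ q ∈ Dset p n A, q.1 + q.2 = v} dval

/-- `N(β)`: the diagonal of `β`. -/
def Nset (p n : ℕ) {K : Type} [Field K] (A : ℤ → ℕ → K) (dval : ℤ) : Set (ℤ × ℤ) :=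
  {q | q ∈ Dset p n A ∧ q.1 + q.2 = dval}

/-- `|N(β)| = 2` (as a set of cosets mod `H`). -/
def NTwoCosets (p n : ℕ) {K : Type} [Field K] (A : ℤ → ℕ → K) (dval : ℤ) : Prop :=
  ∃ q₁ ∈ Nset p n A dval, ∃ q₂ ∈ Nset p n A dval, ¬ cosetEq p n q₁ q₂ ∧
    ∀ q ∈ Nset p n A dval, cosetEq p n q q₁ ∨ cosetEq p n q q₂

/-- `L/K` is semistable: there is `β ∈ L ⊗_K L` with `φ(β) ∈ K[G]`,
`p ∤ d(β)` and `|N(β)| = 2`. -/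
def Semistable (p n : ℕ) (K L : Type) [Field K] [Field L] [Algebra K L]
    [FiniteDimensional K L] (vL : L → WithTop ℤ) (𝒯 : Set K) (πL : L) : Prop :=
  ∃ (β : L ⊗[K] L) (A : ℤ → ℕ → K) (dval : ℤ),
    IsExpansion p n K L vL 𝒯 πL β A ∧ PhiInKG K L β ∧
    IsDval p n A dval ∧ ¬ ((p : ℤ) ∣ dval) ∧ NTwoCosets p n A dval

/-- `L/K` is semistable with precision `c`. -/
def SemistableWithPrec (p n : ℕ) (K L : Type) [Field K] [Field L] [Algebra K L]
    [FiniteDimensional K L] (vL : L → WithTop ℤ) (𝒯 : Set K) (πL : L) (c : ℕ) : Prop :=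
  ∃ (β : L ⊗[K] L) (A : ℤ → ℕ → K) (dval : ℤ),
    IsExpansion p n K L vL 𝒯 πL β A ∧ PhiInKG K L β ∧
    IsDval p n A dval ∧ ¬ ((p : ℤ) ∣ dval) ∧ NTwoCosets p n A dval ∧
    ∀ q ∈ Gset p n A, q ∉ Nset p n A dval → dval + c ≤ q.1 + q.2

/-- `L/K` is stable: semistable with `β` chosen so that `G(β) = N(β)`. -/
def Stable (p n : ℕ) (K L : Type) [Field K] [Field L] [Algebra K L]
    [FiniteDimensional K L] (vL : L → WithTop ℤ) (𝒯 : Set K) (πL : L) : Prop :=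
  ∃ (β : L ⊗[K] L) (A : ℤ → ℕ → K) (dval : ℤ),
    IsExpansion p n K L vL 𝒯 πL β A ∧ PhiInKG K L β ∧
    IsDval p n A dval ∧ ¬ ((p : ℤ) ∣ dval) ∧ NTwoCosets p n A dval ∧
    Gset p n A = Nset p n A dval

/-- `d` is the valuation of the different of `L/K`: the largest `d` such that
every `x` with `v_L(x) ≥ -d` has trace in `O_K`. -/
def IsDifferentExp (K L : Type) [Field K] [Field L] [Algebra K L]
    [FiniteDimensional K L] (vL : L → WithTop ℤ) (d : ℤ) : Prop :=
  IsGreatest {m : ℤ | ∀ x : L, ((-m : ℤ) : WithTop ℤ) ≤ vL x →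
    (0 : WithTop ℤ) ≤ vL (algebraMap K L (Algebra.trace K L x))} d

end


noncomputable section AuxScaffold

lemma digit_lt {p : ℕ} (hp : 2 ≤ p) (s i : ℕ) : digit p s i < p :=
  Nat.mod_lt _ (by omega)

lemma digit_eq_zero_of_lt {p s i : ℕ} (h : s < p ^ i) : digit p s i = 0 := by
  unfold digit
  rw [Nat.div_eq_of_lt h, Nat.zero_mod]

lemma digit_decomp {p : ℕ} (hp : 2 ≤ p) (hi q r j i : ℕ) (hq : q < p) (hr : r < p ^ j) :
    digit p (hi * p ^ (j+1) + q * p ^ j + r) i =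
      if i < j then digit p r i else if i = j then q else digit p hi (i - j - 1) := by
  unfold digit
  rcases lt_trichotomy i j with hij | rfl | hij
  · rw [if_pos hij]
    obtain ⟨k, rfl⟩ : ∃ k, j = k + 1 + i := ⟨j - i - 1, by omega⟩
    have e1 : hi * p ^ (k + 1 + i + 1) + q * p ^ (k + 1 + i) + r
        = r + p ^ i * ((hi * (p ^ k * p) + q * p ^ k) * p) := by ring
    rw [e1, Nat.add_mul_div_left _ _ (by positivity),
      Nat.add_mul_mod_self_right]
  · rw [if_neg (lt_irrefl i), if_pos rfl]
    have e1 : hi * p ^ (i+1) + q * p ^ i + r = r + p ^ i * (q + hi * p) := by ring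
    rw [e1, Nat.add_mul_div_left _ _ (by positivity), Nat.div_eq_of_lt hr, zero_add,
      Nat.add_mul_mod_self_right, Nat.mod_eq_of_lt hq]
  · rw [if_neg (by omega), if_neg (by omega)]
    have e2 : (hi * p ^ (j+1) + q * p ^ j + r) / p ^ (j+1) = hi := by
      have hlt : q * p ^ j + r < p ^ (j+1) := by
        have h5 : (q + 1) * p ^ j ≤ p * p ^ j := Nat.mul_le_mul_right _ (by omega)
        have : q * p ^ j + r < (q + 1) * p ^ j := by
          have := pow_pos (show 0 < p by omega) j
          nlinarith
        calc q * p ^ j + r < (q+1) * p ^ j := this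
          _ ≤ p * p ^ j := h5
          _ = p ^ (j+1) := by ring
      rw [show hi * p ^ (j+1) + q * p ^ j + r = (q * p ^ j + r) + p ^ (j+1) * hi by ring,
        Nat.add_mul_div_left _ _ (by positivity), Nat.div_eq_of_lt hlt, zero_add]
    have e3 : p ^ i = p ^ (j+1) * p ^ (i - j - 1) := by
      rw [← pow_add]; congr 1; omega
    rw [e3, ← Nat.div_div_eq_div_mul, e2]

lemma self_decomp {p : ℕ} (m j : ℕ) :
    m = m / p ^ (j+1) * p ^ (j+1) + digit p m j * p ^ j + m % p ^ j := by
  have h1 : p ^ j * (m / p ^ j) + m % p ^ j = m := Nat.div_add_mod m (p ^ j)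
  have h2 : p * (m / p ^ j / p) + m / p ^ j % p = m / p ^ j := Nat.div_add_mod _ p
  have h3 : m / p ^ j / p = m / p ^ (j+1) := by
    rw [Nat.div_div_eq_div_mul, pow_succ]
  unfold digit
  calc m = p ^ j * (m / p ^ j) + m % p ^ j := h1.symm
    _ = p ^ j * (p * (m / p ^ j / p) + m / p ^ j % p) + m % p ^ j := by rw [h2]
    _ = m / p ^ (j+1) * p ^ (j+1) + m / p ^ j % p * p ^ j + m % p ^ j := by
        rw [h3]; ring

lemma digit_sub_pow {p m j : ℕ} (hp : 2 ≤ p) (hq : 1 ≤ digit p m j) (i : ℕ) :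
    digit p (m - p ^ j) i = if i = j then digit p m j - 1 else digit p m i := by
  obtain ⟨q', hq'⟩ : ∃ q', digit p m j = q' + 1 := ⟨digit p m j - 1, by omega⟩
  have hr : m % p ^ j < p ^ j := Nat.mod_lt _ (by positivity)
  have hqp : digit p m j < p := digit_lt hp m j
  have hm : m = m / p ^ (j+1) * p ^ (j+1) + (q' + 1) * p ^ j + m % p ^ j := by
    rw [← hq']; exact self_decomp m j
  have hsub : m - p ^ j = m / p ^ (j+1) * p ^ (j+1) + q' * p ^ j + m % p ^ j := by
    refine Nat.sub_eq_of_eq_add ?_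
    calc m = m / p ^ (j+1) * p ^ (j+1) + (q' + 1) * p ^ j + m % p ^ j := hm
      _ = m / p ^ (j+1) * p ^ (j+1) + q' * p ^ j + m % p ^ j + p ^ j := by ring
  have d1 : digit p m i = if i < j then digit p (m % p ^ j) i else if i = j then q' + 1
      else digit p (m / p ^ (j+1)) (i - j - 1) := by
    conv_lhs => rw [hm]
    exact digit_decomp hp _ _ _ j i (by omega) hr
  have d2 : digit p (m - p ^ j) i = if i < j then digit p (m % p ^ j) i else if i = j then q'
      else digit p (m / p ^ (j+1)) (i - j - 1) := by
    rw [hsub]; exact digit_decomp hp _ _ _ j i (by omega) hr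
  rw [d2, d1, hq']
  rcases lt_trichotomy i j with h | rfl | h
  · rw [if_pos h, if_pos h, if_neg (by omega)]
  · rw [if_neg (lt_irrefl i), if_neg (lt_irrefl i), if_pos rfl, if_pos rfl]
    omega
  · rw [if_neg (by omega), if_neg (by omega), if_neg (by omega), if_neg (by omega),
      if_neg (by omega)]

lemma bfrak_sub {p n j m : ℕ} (b : ℕ → ℤ) (hp : 2 ≤ p) (hjn : j < n)
    (hq : 1 ≤ digit p m j) :
    bfrak p n b m = bfrak p n b (m - p ^ j) + (p : ℤ) ^ j * b (n - j) := by
  unfold bfrak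
  rw [← Finset.sum_erase_add _ _ (Finset.mem_range.2 hjn),
    ← Finset.sum_erase_add _ _ (Finset.mem_range.2 hjn)]
  have hsame : ∀ i ∈ (Finset.range n).erase j,
      (digit p (m - p ^ j) i : ℤ) * (p:ℤ) ^ i * b (n - i)
        = (digit p m i : ℤ) * (p:ℤ) ^ i * b (n - i) := by
    intro i hi
    rw [digit_sub_pow hp hq i, if_neg (Finset.ne_of_mem_erase hi)]
  rw [Finset.sum_congr rfl hsame, digit_sub_pow hp hq j, if_pos rfl]
  have h6 : ((digit p m j - 1 : ℕ) : ℤ) = (digit p m j : ℤ) - 1 := by omega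
  rw [h6]; ring

lemma bfrak_zero (p n : ℕ) (b : ℕ → ℤ) : bfrak p n b 0 = 0 := by
  unfold bfrak
  apply Finset.sum_eq_zero
  intro i _
  simp [digit]

lemma rres_lt {p n : ℕ} (hp : 0 < p) (t : ℤ) : rres p n t < p ^ n := by
  unfold rres
  have hM : (0:ℤ) < (p:ℤ) ^ n := by positivity
  have h1 := Int.emod_lt_of_pos t hM
  have h2 := Int.emod_nonneg t (ne_of_gt hM)
  have h3 : ((p ^ n : ℕ) : ℤ) = (p:ℤ) ^ n := by push_cast; ring
  omega

lemma rres_coe {p n : ℕ} (hp : 0 < p) (t : ℤ) :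
    (rres p n t : ℤ) = t % ((p:ℤ) ^ n) := by
  unfold rres
  have hM : (0:ℤ) < (p:ℤ) ^ n := by positivity
  exact Int.toNat_of_nonneg (Int.emod_nonneg t (ne_of_gt hM))

lemma rres_congr {p n : ℕ} {t₁ t₂ : ℤ} (h : ((p:ℤ) ^ n) ∣ t₁ - t₂) :
    rres p n t₁ = rres p n t₂ := by
  unfold rres
  congr 1
  have h' : t₂ % ((p:ℤ) ^ n) = t₁ % ((p:ℤ) ^ n) := Int.modEq_iff_dvd.mpr h
  exact h'.symm

lemma afrak_left {p n : ℕ} {b : ℕ → ℤ} {afrak : ℕ → ℕ} (hp : 0 < p)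
    (hafrak : IsAfrak p n b afrak) :
    ∀ m, m < p ^ n → afrak (rres p n (-(bfrak p n b m))) = m := by
  intro m hm
  set F : Fin (p ^ n) → Fin (p ^ n) :=
    fun s => ⟨rres p n (-(bfrak p n b s.1)), rres_lt hp _⟩ with hF
  have hFA : ∀ s : Fin (p ^ n), F ⟨afrak s.1, (hafrak s.1 s.2).1⟩ = s :=
    fun s => Fin.ext ((hafrak s.1 s.2).2)
  have hsurj : Function.Surjective F := fun s => ⟨_, hFA s⟩
  have hinj : Function.Injective F := Finite.injective_iff_surjective.mpr hsurj
  have key : F ⟨afrak (F ⟨m, hm⟩).1, (hafrak _ (F ⟨m, hm⟩).2).1⟩ = F ⟨m, hm⟩ :=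
    hFA (F ⟨m, hm⟩)
  have := hinj key
  have := congrArg Fin.val this
  simpa [hF] using this

lemma afrak_step {p n j : ℕ} {b : ℕ → ℤ} {afrak : ℕ → ℕ} (hp : 2 ≤ p)
    (hafrak : IsAfrak p n b afrak) (t : ℤ) (hjn : j < n)
    (hd : 1 ≤ digit p (afrak (rres p n t)) j) :
    afrak (rres p n (t + (p:ℤ) ^ j * b (n - j))) = afrak (rres p n t) - p ^ j := by
  have hp0 : 0 < p := by omega
  set a := afrak (rres p n t) with ha
  have haN : a < p ^ n := (hafrak (rres p n t) (rres_lt hp0 t)).1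
  have h1 : rres p n (-(bfrak p n b a)) = rres p n t := (hafrak (rres p n t) (rres_lt hp0 t)).2
  have h2 : (p:ℤ) ^ n ∣ t - (-(bfrak p n b a)) := by
    have := congrArg (Nat.cast : ℕ → ℤ) h1
    rw [rres_coe hp0, rres_coe hp0] at this
    exact Int.modEq_iff_dvd.mp this
  have h3 : bfrak p n b a = bfrak p n b (a - p ^ j) + (p:ℤ) ^ j * b (n - j) :=
    bfrak_sub b hp hjn hd
  have h4 : rres p n (t + (p:ℤ) ^ j * b (n - j)) = rres p n (-(bfrak p n b (a - p ^ j))) := by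
    apply rres_congr
    have : t + (p:ℤ) ^ j * b (n - j) - (-(bfrak p n b (a - p ^ j)))
        = t - (-(bfrak p n b a)) := by rw [h3]; ring
    rw [this]; exact h2
  rw [h4, afrak_left hp0 hafrak (a - p ^ j) (by omega)]

section ValLemmas

variable {L : Type} [Field L] (vL : L → WithTop ℤ)

lemma wt_half {x : WithTop ℤ} (hx : x ≠ ⊤) (h : x + x = x + 0) : x = 0 := by
  lift x to ℤ using hx
  rw [add_zero, ← WithTop.coe_add, WithTop.coe_eq_coe] at h
  rw [show x + x = x + x by rfl] at h
  have : x = 0 := by omega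
  exact_mod_cast congrArg (fun z : ℤ => (z : WithTop ℤ)) this

lemma v_one (hv0 : vL 0 = ⊤) (hvfin : ∀ x : L, x ≠ 0 → vL x ≠ ⊤)
    (hvmul : ∀ x y : L, vL (x * y) = vL x + vL y) : vL 1 = 0 := by
  have h : vL 1 + vL 1 = vL 1 + 0 := by
    rw [← hvmul, one_mul, add_zero]
  exact wt_half (hvfin 1 one_ne_zero) h

lemma wt_double {x : WithTop ℤ} (hx : x ≠ ⊤) (h : x + x = 0) : x = 0 := by
  lift x to ℤ using hx
  rw [← WithTop.coe_add, show ((0 : WithTop ℤ)) = ((0 : ℤ) : WithTop ℤ) by rfl,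
    WithTop.coe_eq_coe] at h
  have : x = 0 := by omega
  exact_mod_cast congrArg (fun z : ℤ => (z : WithTop ℤ)) this

lemma v_neg (hv0 : vL 0 = ⊤) (hvfin : ∀ x : L, x ≠ 0 → vL x ≠ ⊤)
    (hvmul : ∀ x y : L, vL (x * y) = vL x + vL y) (x : L) : vL (-x) = vL x := by
  have hm1 : vL (-1 : L) = 0 := by
    have h : vL (-1 : L) + vL (-1 : L) = 0 := by
      rw [← hvmul, neg_one_mul, neg_neg]
      exact v_one vL hv0 hvfin hvmul
    exact wt_double (hvfin (-1) (by norm_num)) h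
  calc vL (-x) = vL ((-1) * x) := by rw [neg_one_mul]
    _ = vL (-1 : L) + vL x := hvmul _ _
    _ = vL x := by rw [hm1, zero_add]

lemma v_sum (hv0 : vL 0 = ⊤)
    (hvmin : ∀ x y : L, min (vL x) (vL y) ≤ vL (x + y))
    {ι : Type*} (S : Finset ι) (f : ι → L) (m : WithTop ℤ)
    (h : ∀ i ∈ S, m ≤ vL (f i)) : m ≤ vL (∑ i ∈ S, f i) := by
  induction S using Finset.cons_induction with
  | empty => rw [Finset.sum_empty, hv0]; exact le_top
  | cons a S ha ih =>
    rw [Finset.sum_cons]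
    refine le_trans (le_min (h a (Finset.mem_cons_self a S)) ?_) (hvmin _ _)
    exact ih fun i hi => h i (Finset.mem_cons_of_mem hi)

end ValLemmas

section ActK

variable (K L : Type) [Field K] [Field L] [Algebra K L]

/-- The algebra-hom version of `actK`. -/
def toEnd : MonoidAlgebra K (L ≃ₐ[K] L) →ₐ[K] Module.End K L :=
  MonoidAlgebra.lift K (Module.End K L) (L ≃ₐ[K] L)
    { toFun := fun σ => σ.toLinearMap
      map_one' := by ext x; rfl
      map_mul' := fun σ τ => by ext x; rfl }

lemma actK_eq (ξ : MonoidAlgebra K (L ≃ₐ[K] L)) (y : L) :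
    actK K L ξ y = toEnd K L ξ y := by
  classical
  induction ξ using MonoidAlgebra.induction_linear with
  | zero => simp [actK, toEnd]
  | add f g hf hg =>
    have : actK K L (f + g) y = actK K L f y + actK K L g y := by
      unfold actK
      rw [MonoidAlgebra.coeff_add, Finsupp.sum_add_index]
      · intro σ _; simp
      · intro σ _ c₁ c₂; rw [map_add]; ring
    rw [this, hf, hg, map_add]; rfl
  | single σ c =>
    unfold actK
    rw [MonoidAlgebra.coeff_single, Finsupp.sum_single_index (by simp)]
    have h1 : (toEnd K L) (MonoidAlgebra.single σ c) = c • σ.toLinearMap := by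
      simp [toEnd, MonoidAlgebra.lift_single]
    show algebraMap K L c * σ y = (toEnd K L) (MonoidAlgebra.single σ c) y
    rw [h1, LinearMap.smul_apply]
    simp [Algebra.smul_def]

lemma actK_mul (ξ η : MonoidAlgebra K (L ≃ₐ[K] L)) (y : L) :
    actK K L (ξ * η) y = actK K L ξ (actK K L η y) := by
  rw [actK_eq, actK_eq, actK_eq, map_mul]; rfl

lemma actK_one (y : L) : actK K L 1 y = y := by
  rw [actK_eq, map_one]; rfl

lemma actK_algMul (ξ : MonoidAlgebra K (L ≃ₐ[K] L)) (k : K) (y : L) :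
    actK K L ξ (algebraMap K L k * y) = algebraMap K L k * actK K L ξ y := by
  rw [actK_eq, actK_eq, ← Algebra.smul_def, map_smul, Algebra.smul_def]

lemma actK_sum (ξ : MonoidAlgebra K (L ≃ₐ[K] L)) {ι : Type*} (S : Finset ι) (f : ι → L) :
    actK K L ξ (∑ i ∈ S, f i) = ∑ i ∈ S, actK K L ξ (f i) := by
  simp only [actK_eq]
  exact map_sum (toEnd K L ξ) f S

end ActK

lemma wt_succ_le {z : ℤ} {x : WithTop ℤ} (h : (z : WithTop ℤ) < x) :
    ((z + 1 : ℤ) : WithTop ℤ) ≤ x := by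
  cases x with
  | top => exact le_top
  | coe w =>
    rw [WithTop.coe_lt_coe] at h
    exact WithTop.coe_le_coe.mpr (by omega)

section Expand

variable {p n : ℕ} {K L : Type} [Field K] [Field L] [Algebra K L]
  [IsGalois K L] [FiniteDimensional K L]
  (vL : L → WithTop ℤ) (lam : ℤ → L)

lemma claimC (hp : 0 < p)
    (hv0 : vL 0 = ⊤) (hvfin : ∀ x : L, x ≠ 0 → vL x ≠ ⊤)
    (hvmul : ∀ x y, vL (x * y) = vL x + vL y)
    (hvmin : ∀ x y, min (vL x) (vL y) ≤ vL (x + y))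
    (hvK : ∀ k : K, k ≠ 0 → ∃ m : ℤ, vL (algebraMap K L k) = ((p ^ n * m : ℤ) : WithTop ℤ))
    (hlam : ∀ t : ℤ, vL (lam t) = (t : WithTop ℤ))
    (g : Fin (p ^ n) → K) (t : Fin (p ^ n)) :
    vL (∑ u, algebraMap K L (g u) * lam (u : ℤ)) ≤ vL (algebraMap K L (g t) * lam (t : ℤ)) := by
  classical
  set c : Fin (p ^ n) → L := fun u => algebraMap K L (g u) * lam (u : ℤ) with hc
  show vL (∑ u, c u) ≤ vL (c t)
  have hlamne : ∀ τ : ℤ, lam τ ≠ 0 := by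
    intro τ h
    have h2 := hlam τ
    rw [h, hv0] at h2
    exact (WithTop.coe_ne_top (a := τ)) h2.symm
  by_cases hall : ∀ u, g u = 0
  · have hct : c t = 0 := by simp [hc, hall t]
    rw [hct, hv0]
    exact le_top
  push_neg at hall
  obtain ⟨u₀, hu₀⟩ := hall
  obtain ⟨t0, -, hmin⟩ := Finset.exists_min_image Finset.univ (fun u => vL (c u))
    ⟨u₀, Finset.mem_univ u₀⟩
  have hcu0 : c u₀ ≠ 0 := mul_ne_zero ((map_ne_zero _).mpr hu₀) (hlamne _)
  have ht0ne : vL (c t0) ≠ ⊤ := by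
    intro h
    have h2 := hmin u₀ (Finset.mem_univ u₀)
    rw [h] at h2
    exact hvfin _ hcu0 (top_le_iff.mp h2)
  obtain ⟨z, hz⟩ := WithTop.ne_top_iff_exists.mp ht0ne
  have hgt0 : g t0 ≠ 0 := by
    intro h
    apply ht0ne
    have : c t0 = 0 := by simp [hc, h]
    rw [this, hv0]
  have hval : ∀ u : Fin (p ^ n), g u ≠ 0 →
      ∃ m : ℤ, vL (c u) = ((p ^ n * m + (u : ℕ) : ℤ) : WithTop ℤ) := by
    intro u hu
    obtain ⟨m, hm⟩ := hvK (g u) hu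
    refine ⟨m, ?_⟩
    have h7 : vL (c u) = vL (algebraMap K L (g u)) + vL (lam (u : ℤ)) := hvmul _ _
    rw [h7, hm, hlam, ← WithTop.coe_add]
  have hstrict : ∀ u ∈ Finset.univ.erase t0, ((z + 1 : ℤ) : WithTop ℤ) ≤ vL (c u) := by
    intro u hu
    have hune : u ≠ t0 := Finset.ne_of_mem_erase hu
    by_cases hgu : g u = 0
    · have : c u = 0 := by simp [hc, hgu]
      rw [this, hv0]; exact le_top
    · obtain ⟨mu, hmu⟩ := hval u hgu
      obtain ⟨m0, hm0⟩ := hval t0 hgt0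
      have hzval : z = p ^ n * m0 + (t0 : ℕ) := by
        have h6 := hz.trans hm0
        exact_mod_cast h6
      have hle : (p ^ n * m0 + (t0 : ℕ) : ℤ) ≤ (p ^ n * mu + (u : ℕ) : ℤ) := by
        have h2 := hmin u (Finset.mem_univ u)
        rw [hmu, hm0] at h2
        exact_mod_cast h2
      have hne : (p ^ n * m0 + (t0 : ℕ) : ℤ) ≠ (p ^ n * mu + (u : ℕ) : ℤ) := by
        intro h
        have hdvd : ((p : ℤ) ^ n) ∣ ((t0 : ℕ) : ℤ) - ((u : ℕ) : ℤ) := by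
          refine ⟨mu - m0, ?_⟩
          have hpn : ((p ^ n : ℕ) : ℤ) = (p : ℤ) ^ n := by push_cast; ring
          nlinarith [h]
        have habs : |((t0 : ℕ) : ℤ) - ((u : ℕ) : ℤ)| < (p : ℤ) ^ n := by
          have h1 : (t0 : ℕ) < p ^ n := t0.2
          have h2 : (u : ℕ) < p ^ n := u.2
          have hpn : ((p ^ n : ℕ) : ℤ) = (p : ℤ) ^ n := by push_cast; ring
          rw [abs_lt]
          omega
        have := Int.eq_zero_of_abs_lt_dvd hdvd habs
        have : (t0 : ℕ) = (u : ℕ) := by omega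
        exact hune (Fin.ext this.symm)
      rw [hmu]
      apply WithTop.coe_le_coe.mpr
      omega
  rw [← Finset.add_sum_erase _ c (Finset.mem_univ t0)]
  suffices hfin : vL (c t0 + ∑ u ∈ Finset.univ.erase t0, c u) ≤ (z : WithTop ℤ) by
    exact hfin.trans (hz ▸ hmin t (Finset.mem_univ t))
  by_contra hcon
  push_neg at hcon
  have hsumgt : (z : WithTop ℤ) < vL (c t0 + ∑ u ∈ Finset.univ.erase t0, c u) := hcon
  have hrest : ((z + 1 : ℤ) : WithTop ℤ) ≤ vL (∑ u ∈ Finset.univ.erase t0, c u) :=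
    v_sum vL hv0 hvmin _ c _ hstrict
  have h8 : c t0 = (c t0 + ∑ u ∈ Finset.univ.erase t0, c u) +
      (- ∑ u ∈ Finset.univ.erase t0, c u) := by ring
  have h9 : ((z + 1 : ℤ) : WithTop ℤ) ≤ vL (c t0) := by
    rw [h8]
    refine le_trans (le_min (wt_succ_le hsumgt) ?_) (hvmin _ _)
    rw [v_neg vL hv0 hvfin hvmul]
    exact hrest
  rw [← hz] at h9
  exact absurd (WithTop.coe_le_coe.mp h9) (by omega)

lemma expand (hdeg : Nat.card (L ≃ₐ[K] L) = p ^ n) (hp : 0 < p)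
    (hv0 : vL 0 = ⊤) (hvfin : ∀ x : L, x ≠ 0 → vL x ≠ ⊤)
    (hvmul : ∀ x y, vL (x * y) = vL x + vL y)
    (hvmin : ∀ x y, min (vL x) (vL y) ≤ vL (x + y))
    (hvK : ∀ k : K, k ≠ 0 → ∃ m : ℤ, vL (algebraMap K L k) = ((p ^ n * m : ℤ) : WithTop ℤ))
    (hlam : ∀ t : ℤ, vL (lam t) = (t : WithTop ℤ)) (x : L) :
    ∃ g : Fin (p ^ n) → K, x = ∑ u, algebraMap K L (g u) * lam (u : ℤ) ∧
      ∀ u, vL x ≤ vL (algebraMap K L (g u) * lam (u : ℤ)) := by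
  classical
  have hlamne : ∀ τ : ℤ, lam τ ≠ 0 := by
    intro τ h
    have h2 := hlam τ
    rw [h, hv0] at h2
    exact (WithTop.coe_ne_top (a := τ)) h2.symm
  have hli : LinearIndependent K (fun u : Fin (p ^ n) => lam (u : ℤ)) := by
    refine Fintype.linearIndependent_iff.mpr fun g hg t => ?_
    have hsum : ∑ u, algebraMap K L (g u) * lam (u : ℤ) = 0 := by
      rw [← hg]
      exact Finset.sum_congr rfl fun u _ => (Algebra.smul_def _ _).symm
    have h2 := claimC vL lam hp hv0 hvfin hvmul hvmin hvK hlam g t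
    rw [hsum, hv0] at h2
    have h3 : algebraMap K L (g t) * lam (t : ℤ) = 0 := by
      by_contra h4
      exact hvfin _ h4 (top_le_iff.mp h2)
    rcases mul_eq_zero.mp h3 with h5 | h5
    · exact (map_eq_zero _).mp h5
    · exact absurd h5 (hlamne _)
  have hcard : Fintype.card (Fin (p ^ n)) = Module.finrank K L := by
    rw [Fintype.card_fin, ← IsGalois.card_aut_eq_finrank, hdeg]
  haveI : Nonempty (Fin (p ^ n)) := ⟨⟨0, by positivity⟩⟩
  set B := basisOfLinearIndependentOfCardEqFinrank hli hcard with hBdef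
  have hB : ∀ u, B u = lam (u : ℤ) := fun u => by
    rw [hBdef, coe_basisOfLinearIndependentOfCardEqFinrank]
  have hx : x = ∑ u, algebraMap K L (B.repr x u) * lam (u : ℤ) := by
    conv_lhs => rw [← B.sum_repr x]
    exact Finset.sum_congr rfl fun u _ => by rw [hB, Algebra.smul_def]
  refine ⟨fun u => B.repr x u, hx, fun u => ?_⟩
  conv_lhs => rw [hx]
  exact claimC vL lam hp hv0 hvfin hvmul hvmin hvK hlam _ u

end Expand

section Bounds

variable {p n : ℕ} {K L : Type} [Field K] [Field L] [Algebra K L]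
  [IsGalois K L] [FiniteDimensional K L]
  (vL : L → WithTop ℤ) (b : ℕ → ℤ) (afrak : ℕ → ℕ)
  (Ψ : ℕ → MonoidAlgebra K (L ≃ₐ[K] L)) (lam : ℤ → L) (c : ℕ)

lemma actK_addy (ξ : MonoidAlgebra K (L ≃ₐ[K] L)) (y z : L) :
    actK K L ξ (y + z) = actK K L ξ y + actK K L ξ z := by
  rw [actK_eq, actK_eq, actK_eq]
  exact map_add _ y z

lemma boundPsi (hdeg : Nat.card (L ≃ₐ[K] L) = p ^ n) (hp : 0 < p)
    (hv0 : vL 0 = ⊤) (hvfin : ∀ x : L, x ≠ 0 → vL x ≠ ⊤)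
    (hvmul : ∀ x y, vL (x * y) = vL x + vL y)
    (hvmin : ∀ x y, min (vL x) (vL y) ≤ vL (x + y))
    (hvK : ∀ k : K, k ≠ 0 → ∃ m : ℤ, vL (algebraMap K L k) = ((p ^ n * m : ℤ) : WithTop ℤ))
    (hlam : ∀ t : ℤ, vL (lam t) = (t : WithTop ℤ))
    (hscaf4 : ∀ i : ℕ, 1 ≤ i → i ≤ n → ∀ t : ℤ,
      (1 ≤ digit p (afrak (rres p n t)) (n - i) →
        ∃ u : K, vL (algebraMap K L u) = 0 ∧
          ((t + (p : ℤ) ^ (n - i) * b i + c : ℤ) : WithTop ℤ) ≤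
            vL (actK K L (Ψ i) (lam t) -
              algebraMap K L u * lam (t + (p : ℤ) ^ (n - i) * b i))) ∧
      (digit p (afrak (rres p n t)) (n - i) = 0 →
        ((t + (p : ℤ) ^ (n - i) * b i + c : ℤ) : WithTop ℤ) ≤
          vL (actK K L (Ψ i) (lam t))))
    (i : ℕ) (h1i : 1 ≤ i) (hin : i ≤ n) (x : L) :
    vL x + (((p : ℤ) ^ (n - i) * b i : ℤ) : WithTop ℤ) ≤ vL (actK K L (Ψ i) x) := by
  classical
  set B : ℤ := (p : ℤ) ^ (n - i) * b i with hB
  have hlamb : ∀ τ : ℤ, ((τ + B : ℤ) : WithTop ℤ) ≤ vL (actK K L (Ψ i) (lam τ)) := by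
    intro τ
    have hcle : ((τ + B : ℤ) : WithTop ℤ) ≤ ((τ + B + c : ℤ) : WithTop ℤ) := by
      apply WithTop.coe_le_coe.mpr
      have : (0 : ℤ) ≤ (c : ℤ) := Int.natCast_nonneg c
      linarith
    rcases Nat.eq_zero_or_pos (digit p (afrak (rres p n τ)) (n - i)) with h0 | h1
    · exact le_trans hcle ((hscaf4 i h1i hin τ).2 h0)
    · obtain ⟨u, hu0, hu⟩ := (hscaf4 i h1i hin τ).1 h1
      have heq : actK K L (Ψ i) (lam τ)
          = (actK K L (Ψ i) (lam τ) - algebraMap K L u * lam (τ + B))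
            + algebraMap K L u * lam (τ + B) := by ring
      rw [heq]
      refine le_trans (le_min (le_trans hcle hu) ?_) (hvmin _ _)
      rw [hvmul, hu0, zero_add, hlam]
  obtain ⟨g, hgx, hgv⟩ := expand vL lam hdeg hp hv0 hvfin hvmul hvmin hvK hlam x
  have hact : actK K L (Ψ i) x
      = ∑ u : Fin (p ^ n), actK K L (Ψ i) (algebraMap K L (g u) * lam (u : ℤ)) := by
    conv_lhs => rw [hgx]
    exact actK_sum K L _ _ _
  rw [hact]
  apply v_sum vL hv0 hvmin
  intro u _
  rw [actK_algMul, hvmul]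
  calc vL x + (B : WithTop ℤ)
      ≤ vL (algebraMap K L (g u) * lam (u : ℤ)) + (B : WithTop ℤ) :=
        add_le_add_left (hgv u) _
    _ = vL (algebraMap K L (g u)) + (((u : ℤ) + B : ℤ) : WithTop ℤ) := by
        rw [hvmul, hlam, WithTop.coe_add, add_assoc]
    _ ≤ vL (algebraMap K L (g u)) + vL (actK K L (Ψ i) (lam (u : ℤ))) :=
        add_le_add_right (hlamb (u : ℤ)) _

lemma prod_trunc {j : ℕ} (hjn : j < n) (m : ℕ)
    (hm : ∀ i, j < i → digit p m i = 0) :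
    ((List.range n).map fun i => Ψ (n - i) ^ digit p m i).prod
      = ((List.range j).map fun i => Ψ (n - i) ^ digit p m i).prod
        * Ψ (n - j) ^ digit p m j := by
  have hsplit : List.range n
      = List.range (j+1) ++ (List.range (n - (j+1))).map (fun x => (j+1) + x) := by
    rw [← List.range_add]; congr 1; omega
  rw [hsplit, List.map_append, List.prod_append, List.map_map]
  have h1 : ((List.range (n - (j+1))).map
      ((fun i => Ψ (n - i) ^ digit p m i) ∘ (fun x => (j+1) + x))).prod = 1 := by
    apply List.prod_eq_one
    intro x hx
    obtain ⟨i, _, rfl⟩ := List.mem_map.mp hx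
    simp only [Function.comp_apply]
    rw [hm (j + 1 + i) (by omega), pow_zero]
  rw [h1, mul_one, List.range_succ, List.map_append, List.prod_append]
  simp

lemma peel (hp2 : 2 ≤ p) {s : ℕ} (hs1 : 1 ≤ s) (hsn : s < p ^ n) :
    Nat.log p s < n ∧ 1 ≤ digit p s (Nat.log p s) ∧
    ((List.range n).map fun i => Ψ (n - i) ^ digit p s i).prod
      = ((List.range n).map fun i => Ψ (n - i) ^ digit p (s - p ^ Nat.log p s) i).prod
        * Ψ (n - Nat.log p s) := by
  set j := Nat.log p s with hj0
  have hj : j < n := Nat.log_lt_of_lt_pow (by omega) hsn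
  have hlow : p ^ j ≤ s := Nat.pow_log_le_self p (by omega)
  have hhigh : s < p ^ (j + 1) := Nat.lt_pow_succ_log_self (by omega) s
  have hd : 1 ≤ digit p s j := by
    unfold digit
    have hdivlt : s / p ^ j < p := by
      apply Nat.div_lt_of_lt_mul
      rw [pow_succ] at hhigh
      exact hhigh
    rw [Nat.mod_eq_of_lt hdivlt]
    exact (Nat.one_le_div_iff (by positivity)).mpr hlow
  have hzero : ∀ i, j < i → digit p s i = 0 := fun i hi =>
    digit_eq_zero_of_lt (lt_of_lt_of_le hhigh (Nat.pow_le_pow_right (by omega) hi))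
  have hzero' : ∀ i, j < i → digit p (s - p ^ j) i = 0 := by
    intro i hi
    rw [digit_sub_pow hp2 hd i, if_neg (by omega)]
    exact hzero i hi
  refine ⟨hj, hd, ?_⟩
  rw [prod_trunc Ψ hj s hzero, prod_trunc Ψ hj (s - p ^ j) hzero']
  have hQ : (List.range j).map (fun i => Ψ (n - i) ^ digit p s i)
      = (List.range j).map (fun i => Ψ (n - i) ^ digit p (s - p ^ j) i) := by
    apply List.map_congr_left
    intro i hi
    congr 1
    rw [digit_sub_pow hp2 hd i, if_neg (by
      have := List.mem_range.mp hi
      omega)]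
  have hdig : digit p (s - p ^ j) j = digit p s j - 1 := by
    rw [digit_sub_pow hp2 hd j, if_pos rfl]
  rw [hQ, hdig, mul_assoc, ← pow_succ, Nat.sub_add_cancel hd]

lemma boundP (hp2 : 2 ≤ p) (hdeg : Nat.card (L ≃ₐ[K] L) = p ^ n)
    (hv0 : vL 0 = ⊤) (hvfin : ∀ x : L, x ≠ 0 → vL x ≠ ⊤)
    (hvmul : ∀ x y, vL (x * y) = vL x + vL y)
    (hvmin : ∀ x y, min (vL x) (vL y) ≤ vL (x + y))
    (hvK : ∀ k : K, k ≠ 0 → ∃ m : ℤ, vL (algebraMap K L k) = ((p ^ n * m : ℤ) : WithTop ℤ))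
    (hlam : ∀ t : ℤ, vL (lam t) = (t : WithTop ℤ))
    (hscaf4 : ∀ i : ℕ, 1 ≤ i → i ≤ n → ∀ t : ℤ,
      (1 ≤ digit p (afrak (rres p n t)) (n - i) →
        ∃ u : K, vL (algebraMap K L u) = 0 ∧
          ((t + (p : ℤ) ^ (n - i) * b i + c : ℤ) : WithTop ℤ) ≤
            vL (actK K L (Ψ i) (lam t) -
              algebraMap K L u * lam (t + (p : ℤ) ^ (n - i) * b i))) ∧
      (digit p (afrak (rres p n t)) (n - i) = 0 →
        ((t + (p : ℤ) ^ (n - i) * b i + c : ℤ) : WithTop ℤ) ≤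
          vL (actK K L (Ψ i) (lam t)))) :
    ∀ s : ℕ, s < p ^ n → ∀ x : L,
      vL x + ((bfrak p n b s : ℤ) : WithTop ℤ)
        ≤ vL (actK K L (((List.range n).map fun i => Ψ (n - i) ^ digit p s i).prod) x) := by
  intro s
  induction s using Nat.strong_induction_on with
  | _ s IH =>
    intro hsn x
    rcases Nat.eq_zero_or_pos s with rfl | hs1
    · have hP : ((List.range n).map fun i => Ψ (n - i) ^ digit p 0 i).prod = 1 := by
        apply List.prod_eq_one
        intro y hy
        obtain ⟨i, _, rfl⟩ := List.mem_map.mp hy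
        rw [show digit p 0 i = 0 by simp [digit], pow_zero]
      rw [hP, actK_one, bfrak_zero]
      simp
    · obtain ⟨hj, hd, hprod⟩ := peel Ψ hp2 hs1 hsn
      have hppos : 0 < p ^ Nat.log p s := by positivity
      have hs' : s - p ^ Nat.log p s < s := by omega
      have hsn' : s - p ^ Nat.log p s < p ^ n := by omega
      have hbs : bfrak p n b s
          = bfrak p n b (s - p ^ Nat.log p s) + (p:ℤ) ^ Nat.log p s * b (n - Nat.log p s) :=
        bfrak_sub b hp2 hj hd
      rw [hprod, actK_mul]
      have h1 : vL x + (((p:ℤ) ^ Nat.log p s * b (n - Nat.log p s) : ℤ) : WithTop ℤ)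
          ≤ vL (actK K L (Ψ (n - Nat.log p s)) x) := by
        have h2 := boundPsi vL b afrak Ψ lam c hdeg (by omega) hv0 hvfin hvmul hvmin hvK hlam
          hscaf4 (n - Nat.log p s) (by omega) (by omega) x
        rw [show n - (n - Nat.log p s) = Nat.log p s by omega] at h2
        exact h2
      calc vL x + ((bfrak p n b s : ℤ) : WithTop ℤ)
          = vL x + (((p:ℤ) ^ Nat.log p s * b (n - Nat.log p s) : ℤ) : WithTop ℤ)
            + ((bfrak p n b (s - p ^ Nat.log p s) : ℤ) : WithTop ℤ) := by
            rw [hbs, WithTop.coe_add]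
            abel
        _ ≤ vL (actK K L (Ψ (n - Nat.log p s)) x)
            + ((bfrak p n b (s - p ^ Nat.log p s) : ℤ) : WithTop ℤ) := add_le_add_left h1 _
        _ ≤ _ := IH (s - p ^ Nat.log p s) hs' hsn' (actK K L (Ψ (n - Nat.log p s)) x)

end Bounds

end AuxScaffold

/-- Equation (1) of the paper: action of the monomials Ψ^(s) on the λ_t. -/
theorem stmt_16 (p n : ℕ) (hp : p.Prime) (hn : 1 ≤ n)
    (K L : Type) [Field K] [Field L] [Algebra K L] [IsGalois K L] [FiniteDimensional K L]
    (hdeg : Nat.card (L ≃ₐ[K] L) = p ^ n)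
    (vL : L → WithTop ℤ) (hctx : LocalCtx p n K L vL)
    (b : ℕ → ℤ) (hb : IsRamBreaks p n K L vL b)
    (hpb : ∀ i : ℕ, 1 ≤ i → i ≤ n → ¬ ((p : ℤ) ∣ b i))
    (afrak : ℕ → ℕ) (hafrak : IsAfrak p n b afrak)
    (Ψ : ℕ → MonoidAlgebra K (L ≃ₐ[K] L)) (lam : ℤ → L)
    (c : ℕ) (hc1 : 1 ≤ c)
    (hscaf : IsGaloisScaffold p n K L vL b afrak Ψ lam c) :
    ∀ s : ℕ, s < p ^ n → ∀ t : ℤ,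
      ((∀ i : ℕ, i < n → digit p s i ≤ digit p (afrak (rres p n t)) i) →
        ∃ U : K, vL (algebraMap K L U) = 0 ∧
          ((t + bfrak p n b s + c : ℤ) : WithTop ℤ) ≤
            vL (actK K L (((List.range n).map fun i => Ψ (n - i) ^ digit p s i).prod)
                  (lam t) -
                algebraMap K L U * lam (t + bfrak p n b s))) ∧
      ((¬ ∀ i : ℕ, i < n → digit p s i ≤ digit p (afrak (rres p n t)) i) →
        ((t + bfrak p n b s + c : ℤ) : WithTop ℤ) ≤
          vL (actK K L (((List.range n).map fun i => Ψ (n - i) ^ digit p s i).prod)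
                (lam t))) := by
  obtain ⟨⟨hv0, hvfin, hvmul, hvmin, hvsurj⟩, hgal, hvK, hcompl, hperf⟩ := hctx
  obtain ⟨hlam, hlamK, hpsi1, hscaf4⟩ := hscaf
  have hp2 : 2 ≤ p := hp.two_le
  intro s
  induction s using Nat.strong_induction_on with
  | _ s IH =>
    intro hsn t
    rcases Nat.eq_zero_or_pos s with rfl | hs1
    · have hP : ((List.range n).map fun i => Ψ (n - i) ^ digit p 0 i).prod = 1 := by
        apply List.prod_eq_one
        intro y hy
        obtain ⟨i, _, rfl⟩ := List.mem_map.mp hy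
        rw [show digit p 0 i = 0 by simp [digit], pow_zero]
      constructor
      · intro _
        refine ⟨1, ?_, ?_⟩
        · rw [map_one]; exact v_one vL hv0 hvfin hvmul
        · rw [hP, actK_one, bfrak_zero, add_zero, map_one, one_mul, sub_self, hv0]
          exact le_top
      · intro hno
        exact absurd (fun i _ => by simp [digit]) hno
    · obtain ⟨hj, hd, hprod⟩ := peel Ψ hp2 hs1 hsn
      have hppos : 0 < p ^ Nat.log p s := by positivity
      have hs'lt : s - p ^ Nat.log p s < s := by omega
      have hsn' : s - p ^ Nat.log p s < p ^ n := by omega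
      have hbs : bfrak p n b s
          = bfrak p n b (s - p ^ Nat.log p s)
            + (p:ℤ) ^ Nat.log p s * b (n - Nat.log p s) :=
        bfrak_sub b hp2 hj hd
      have hnn : n - (n - Nat.log p s) = Nat.log p s := by omega
      rcases Nat.eq_zero_or_pos (digit p (afrak (rres p n t)) (Nat.log p s)) with ha0 | ha1
      · have hnot : ¬ ∀ i, i < n → digit p s i ≤ digit p (afrak (rres p n t)) i := by
          intro h
          have := h (Nat.log p s) hj
          omega
        refine ⟨fun h => absurd h hnot, fun _ => ?_⟩
        have h2 := (hscaf4 (n - Nat.log p s) (by omega) (by omega) t).2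
          (by rw [hnn]; exact ha0)
        rw [hnn] at h2
        rw [hprod, actK_mul]
        calc ((t + bfrak p n b s + c : ℤ) : WithTop ℤ)
            = ((t + (p:ℤ) ^ Nat.log p s * b (n - Nat.log p s) + c : ℤ) : WithTop ℤ)
              + ((bfrak p n b (s - p ^ Nat.log p s) : ℤ) : WithTop ℤ) := by
              rw [← WithTop.coe_add]; congr 1; rw [hbs]; ring
          _ ≤ vL (actK K L (Ψ (n - Nat.log p s)) (lam t))
              + ((bfrak p n b (s - p ^ Nat.log p s) : ℤ) : WithTop ℤ) :=
              add_le_add_left h2 _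
          _ ≤ _ := boundP vL b afrak Ψ lam c hp2 hdeg hv0 hvfin hvmul hvmin hvK hlam hscaf4
              (s - p ^ Nat.log p s) hsn' (actK K L (Ψ (n - Nat.log p s)) (lam t))
      · obtain ⟨u, hu0, hu⟩ := (hscaf4 (n - Nat.log p s) (by omega) (by omega) t).1
          (by rw [hnn]; exact ha1)
        rw [hnn] at hu
        have hstep : afrak (rres p n (t + (p:ℤ) ^ Nat.log p s * b (n - Nat.log p s)))
            = afrak (rres p n t) - p ^ Nat.log p s := afrak_step hp2 hafrak t hj ha1
        have hE : ((t + bfrak p n b s + c : ℤ) : WithTop ℤ)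
            ≤ vL (actK K L
                (((List.range n).map fun i =>
                  Ψ (n - i) ^ digit p (s - p ^ Nat.log p s) i).prod)
                (actK K L (Ψ (n - Nat.log p s)) (lam t)
                  - algebraMap K L u
                    * lam (t + (p:ℤ) ^ Nat.log p s * b (n - Nat.log p s)))) := by
          calc ((t + bfrak p n b s + c : ℤ) : WithTop ℤ)
              = ((t + (p:ℤ) ^ Nat.log p s * b (n - Nat.log p s) + c : ℤ) : WithTop ℤ)
                + ((bfrak p n b (s - p ^ Nat.log p s) : ℤ) : WithTop ℤ) := by
                rw [← WithTop.coe_add]; congr 1; rw [hbs]; ring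
            _ ≤ vL (actK K L (Ψ (n - Nat.log p s)) (lam t)
                  - algebraMap K L u
                    * lam (t + (p:ℤ) ^ Nat.log p s * b (n - Nat.log p s)))
                + ((bfrak p n b (s - p ^ Nat.log p s) : ℤ) : WithTop ℤ) :=
                add_le_add_left hu _
            _ ≤ _ := boundP vL b afrak Ψ lam c hp2 hdeg hv0 hvfin hvmul hvmin hvK hlam hscaf4
                (s - p ^ Nat.log p s) hsn' _
        have hsplit : actK K L (((List.range n).map fun i => Ψ (n - i) ^ digit p s i).prod)
              (lam t)
            = actK K L (((List.range n).map fun i =>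
                Ψ (n - i) ^ digit p (s - p ^ Nat.log p s) i).prod)
              (actK K L (Ψ (n - Nat.log p s)) (lam t)
                - algebraMap K L u * lam (t + (p:ℤ) ^ Nat.log p s * b (n - Nat.log p s)))
              + algebraMap K L u
                * actK K L (((List.range n).map fun i =>
                    Ψ (n - i) ^ digit p (s - p ^ Nat.log p s) i).prod)
                  (lam (t + (p:ℤ) ^ Nat.log p s * b (n - Nat.log p s))) := by
          rw [hprod, actK_mul]
          have hy : actK K L (Ψ (n - Nat.log p s)) (lam t)
              = (actK K L (Ψ (n - Nat.log p s)) (lam t)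
                  - algebraMap K L u * lam (t + (p:ℤ) ^ Nat.log p s * b (n - Nat.log p s)))
                + algebraMap K L u * lam (t + (p:ℤ) ^ Nat.log p s * b (n - Nat.log p s)) := by
            ring
          conv_lhs => rw [hy]
          rw [actK_addy, actK_algMul]
        have hidx : t + (p:ℤ) ^ Nat.log p s * b (n - Nat.log p s)
            + bfrak p n b (s - p ^ Nat.log p s) = t + bfrak p n b s := by
          rw [hbs]; ring
        obtain ⟨IH1, IH2⟩ := IH (s - p ^ Nat.log p s) hs'lt hsn'
          (t + (p:ℤ) ^ Nat.log p s * b (n - Nat.log p s))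
        constructor
        · intro hyes
          have hyes' : ∀ i, i < n → digit p (s - p ^ Nat.log p s) i
              ≤ digit p (afrak (rres p n
                (t + (p:ℤ) ^ Nat.log p s * b (n - Nat.log p s)))) i := by
            intro i hi
            rw [hstep, digit_sub_pow hp2 ha1 i, digit_sub_pow hp2 hd i]
            by_cases hij : i = Nat.log p s
            · rw [if_pos hij, if_pos hij]
              have h3 := hyes i hi
              rw [hij] at h3
              omega
            · rw [if_neg hij, if_neg hij]
              exact hyes i hi
          obtain ⟨U', hU'0, hU'⟩ := IH1 hyes'
          refine ⟨u * U', ?_, ?_⟩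
          · rw [map_mul, hvmul, hu0, hU'0, add_zero]
          · have harr : actK K L (((List.range n).map fun i =>
                  Ψ (n - i) ^ digit p s i).prod) (lam t)
                - algebraMap K L (u * U') * lam (t + bfrak p n b s)
                = actK K L (((List.range n).map fun i =>
                    Ψ (n - i) ^ digit p (s - p ^ Nat.log p s) i).prod)
                  (actK K L (Ψ (n - Nat.log p s)) (lam t)
                    - algebraMap K L u * lam (t + (p:ℤ) ^ Nat.log p s * b (n - Nat.log p s)))
                  + algebraMap K L u
                    * (actK K L (((List.range n).map fun i =>
                        Ψ (n - i) ^ digit p (s - p ^ Nat.log p s) i).prod)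
                        (lam (t + (p:ℤ) ^ Nat.log p s * b (n - Nat.log p s)))
                      - algebraMap K L U'
                        * lam (t + (p:ℤ) ^ Nat.log p s * b (n - Nat.log p s)
                            + bfrak p n b (s - p ^ Nat.log p s))) := by
              rw [hsplit, map_mul, hidx]
              ring
            rw [harr]
            refine le_trans (le_min hE ?_) (hvmin _ _)
            rw [hvmul, hu0, zero_add]
            exact le_trans (le_of_eq (by rw [← hidx])) hU'
        · intro hno
          have hno' : ¬ ∀ i, i < n → digit p (s - p ^ Nat.log p s) i
              ≤ digit p (afrak (rres p n
                (t + (p:ℤ) ^ Nat.log p s * b (n - Nat.log p s)))) i := by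
            intro h
            apply hno
            intro i hi
            have h2 := h i hi
            rw [hstep, digit_sub_pow hp2 ha1 i, digit_sub_pow hp2 hd i] at h2
            by_cases hij : i = Nat.log p s
            · rw [if_pos hij, if_pos hij] at h2
              rw [hij]
              omega
            · rw [if_neg hij, if_neg hij] at h2
              exact h2
          have hmain := IH2 hno'
          rw [hsplit]
          refine le_trans (le_min hE ?_) (hvmin _ _)
          rw [hvmul, hu0, zero_add]
          exact le_trans (le_of_eq (by rw [← hidx])) hmain
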